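/- For every h ∈ ℕ and variables Z_1,…,Z_h, substituting X_𝓘 := Z_{|𝓘|} for every nonempty subset 𝓘 ⊆ {1,…,h} in the generalized Igusa function yields I^wo_h((Z_{|𝓘|})_𝓘) = I_h(1; Z_1,…,Z_h) as rational functions in Z_1,…,Z_h over ℚ. -/

import Mathlib

noncomputable section

/-- The Gaussian binomial coefficient `binom(a,b)_Y`, as an element of a field,
evaluated at `Y`. -/
def gaussBinom {K : Type*} [Field K] (Y : K) (a b : ℕ) : K :=
  (∏ i ∈ Finset.Icc (a - b + 1) a, (1 - Y ^ i)) / ∏ i ∈ Finset.Icc 1 b, (1 - Y ^ i)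

def gaussMultinomAux {K : Type*} [Field K] (Y : K) : ℕ → List ℕ → K
  | _, [] => 1
  | n, i :: is => gaussBinom Y n i * gaussMultinomAux Y i is

/-- The Gaussian multinomial coefficient `binom(n, I)_Y`:
for `I = {i₁ < ⋯ < iₘ}`, this is `binom(n,iₘ)_Y · binom(iₘ,i_{m-1})_Y ⋯ binom(i₂,i₁)_Y`. -/
def gaussMultinom {K : Type*} [Field K] (Y : K) (n : ℕ) (I : Finset ℕ) : K :=
  gaussMultinomAux Y n ((I.sort (· ≤ ·)).reverse)

def multinomAux : ℕ → List ℕ → ℕ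
  | _, [] => 1
  | n, i :: is => n.choose i * multinomAux i is

/-- The ordinary multinomial coefficient `binom(n, I)`, the value of `binom(n,I)_Y` at `Y = 1`. -/
def multinom (n : ℕ) (I : Finset ℕ) : ℕ :=
  multinomAux n ((I.sort (· ≤ ·)).reverse)

/-- The Igusa function `I_h(Y; X_1, …, X_h)`. -/
def igusa {K : Type*} [Field K] (h : ℕ) (Y : K) (X : ℕ → K) : K :=
  (1 - X h)⁻¹ * ∑ I ∈ (Finset.Icc 1 (h - 1)).powerset,
    gaussMultinom Y h I * ∏ i ∈ I, X i / (1 - X i)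

/-- The Igusa function `I_h^∘(Y; X_1, …, X_h)`. -/
def igusaCirc {K : Type*} [Field K] (h : ℕ) (Y : K) (X : ℕ → K) : K :=
  X h * igusa h Y X

/-- The Igusa function at `Y = 1`, `I_h(1; X_1, …, X_h)`, with ordinary multinomials. -/
def igusaOne {K : Type*} [Field K] (h : ℕ) (X : ℕ → K) : K :=
  (1 - X h)⁻¹ * ∑ I ∈ (Finset.Icc 1 (h - 1)).powerset,
    (multinom h I : K) * ∏ i ∈ I, X i / (1 - X i)

/-- The chains (of arbitrary finite length, including the empty chain) of nonempty proper
subsets of `{1, …, h}`, encoded as finsets of subsets that are totally ordered by inclusion. -/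
def chainsOn (h : ℕ) : Finset (Finset (Finset ℕ)) :=
  ((Finset.Icc 1 h).powerset.filter
      (fun I => I ≠ ∅ ∧ I ≠ Finset.Icc 1 h)).powerset.filter
    (fun C => ∀ I ∈ C, ∀ J ∈ C, I ⊆ J ∨ J ⊆ I)

/-- The generalized Igusa function `I^wo_h((X_𝓘)_𝓘)`, with variables indexed by the
nonempty subsets of `{1, …, h}`. -/
def igusaWO {K : Type*} [Field K] (h : ℕ) (X : Finset ℕ → K) : K :=
  (1 - X (Finset.Icc 1 h))⁻¹ * ∑ C ∈ chainsOn h, ∏ I ∈ C, X I / (1 - X I)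

/-- The Igusa function `I_h(Y; X_1, …, X_h)` with power series arguments. -/
def igusaPS (h : ℕ) (Y : ℚ) (X : ℕ → PowerSeries ℚ) : PowerSeries ℚ :=
  (1 - X h)⁻¹ * ∑ I ∈ (Finset.Icc 1 (h - 1)).powerset,
    (PowerSeries.C : ℚ →+* PowerSeries ℚ) (gaussMultinom Y h I) * ∏ i ∈ I, X i * (1 - X i)⁻¹

/-- The Igusa function `I_h^∘(Y; X_1, …, X_h)` with power series arguments. -/
def igusaCircPS (h : ℕ) (Y : ℚ) (X : ℕ → PowerSeries ℚ) : PowerSeries ℚ :=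
  X h * igusaPS h Y X

/-- The Igusa function `I_h(1; X_1, …, X_h)` with power series arguments. -/
def igusaOnePS (h : ℕ) (X : ℕ → PowerSeries ℚ) : PowerSeries ℚ :=
  (1 - X h)⁻¹ * ∑ I ∈ (Finset.Icc 1 (h - 1)).powerset,
    (multinom h I : PowerSeries ℚ) * ∏ i ∈ I, X i * (1 - X i)⁻¹

/-- The generalized Igusa function `I^wo_h` with power series arguments. -/
def igusaWOPS (h : ℕ) (X : Finset ℕ → PowerSeries ℚ) : PowerSeries ℚ :=
  (1 - X (Finset.Icc 1 h))⁻¹ * ∑ C ∈ chainsOn h, ∏ I ∈ C, X I * (1 - X I)⁻¹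

/-- `lam` encodes a partition `λ_1 ≥ ⋯ ≥ λ_n ≥ 0` with at most `n` parts
(indexed from `1`; the irrelevant values `lam 0` and `lam j` for `j > n` are zero). -/
def IsPartition (n : ℕ) (lam : ℕ → ℕ) : Prop :=
  (∀ j, 1 ≤ j → lam (j + 1) ≤ lam j) ∧ ∀ j, j = 0 ∨ n < j → lam j = 0

/-- `ℓ` encodes an `n`-tuple of non-negative integers, indexed from `1`
(the irrelevant values at `0` and beyond `n` are zero). -/
def IsTuple (n : ℕ) (ℓ : ℕ → ℕ) : Prop :=
  ∀ j, j = 0 ∨ n < j → ℓ j = 0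

/-- The dual partition: `λ'_k = #{j ∈ {1,…,n} : λ_j ≥ k}`. -/
def dualPart (n : ℕ) (lam : ℕ → ℕ) (k : ℕ) : ℕ :=
  ((Finset.Icc 1 n).filter fun j => k ≤ lam j).card

/-- `α(λ, μ; p)`: the number of subgroups of `⊕_{k=1}^n ℤ/p^{λ_k}ℤ` that are isomorphic
to `⊕_{k=1}^n ℤ/p^{μ_k}ℤ`. -/
def alphaCount (p n : ℕ) (lam mu : ℕ → ℕ) : ℕ :=
  Nat.card {H : AddSubgroup ((j : Fin n) → ZMod (p ^ lam (j.1 + 1))) //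
    Nonempty (H ≃+ ((j : Fin n) → ZMod (p ^ mu (j.1 + 1))))}

/-- `β(λ)`: the number of `n`-tuples `ℓ ∈ ℕ₀ⁿ` whose non-increasing rearrangement is `λ`. -/
def betaCount (n : ℕ) (lam : ℕ → ℕ) : ℕ :=
  Nat.card {ℓ : Fin n → ℕ // ∃ σ : Equiv.Perm (Fin n), ∀ j, ℓ (σ j) = lam (j.1 + 1)}

/-- `(r, L, M)` are the parameters of a Dyck word of length `2n`:
`w = 0^{L_1}1^{M_1}0^{L_2-L_1}1^{M_2-M_1}⋯0^{L_r-L_{r-1}}1^{M_r-M_{r-1}}`. -/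
def DyckParams (n r : ℕ) (L M : ℕ → ℕ) : Prop :=
  1 ≤ r ∧ L 0 = 0 ∧ M 0 = 0 ∧ L r = n ∧ M r = n ∧
    ∀ i ∈ Finset.Icc 1 r, L (i - 1) < L i ∧ M (i - 1) < M i ∧ M i ≤ L i

/-- `w(μ, λ) = w` for the Dyck word `w` with parameters `(r, L, M)`:
`λ_{L_i} ≥ μ_{M_{i-1}+1}` for `i ∈ {1,…,r}` and `μ_{M_i} > λ_{L_i+1}` for `i ∈ {1,…,r-1}`. -/
def WMatch (r : ℕ) (L M : ℕ → ℕ) (mu lam : ℕ → ℕ) : Prop :=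
  (∀ i ∈ Finset.Icc 1 r, mu (M (i - 1) + 1) ≤ lam (L i)) ∧
    ∀ i ∈ Finset.Icc 1 (r - 1), lam (L i + 1) < mu (M i)

/-- `t_i = |𝒜_1| + ⋯ + |𝒜_i|` for an ordered set partition `𝒜`. -/
def tpar (𝒜 : ℕ → Finset ℕ) (i : ℕ) : ℕ :=
  ∑ k ∈ Finset.Icc 1 i, (𝒜 k).card

/-- The `j`-th smallest element of a finite set of naturals (`j` counted from `1`). -/
def sortedElt (A : Finset ℕ) (j : ℕ) : ℕ :=
  (A.sort (· ≤ ·)).getD (j - 1) 0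

/-- `ε^{(i)}(𝓘) = L_{i-1} + ∑_{j ∈ 𝓘} f_{a^{(i)}_j}`, where `a^{(i)}_1 < ⋯` are the
elements of `𝒜_i`. -/
def epsA (f L : ℕ → ℕ) (𝒜 : ℕ → Finset ℕ) (i : ℕ) (I : Finset ℕ) : ℕ :=
  L (i - 1) + ∑ j ∈ I, f (sortedElt (𝒜 i) j)

/-- The number of ideals of additive index `m` in the Heisenberg Lie ring `L(R) = R⊕R⊕R`
with bracket `[(a,b,c),(a',b',c')] = (0,0,ab'-a'b)`. -/
def heisenbergIdealCount (R : Type*) [CommRing R] (m : ℕ) : ℕ :=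
  Nat.card {I : AddSubgroup (R × R × R) //
    (∀ x ∈ I, ∀ y : R × R × R, (0, 0, y.1 * x.2.1 - x.1 * y.2.1) ∈ I) ∧ I.index = m}

/-- The explicit rational function `E^f_{w,𝒜}(X,Y)` attached to a Dyck word with parameters
`(r, L, M)` and a compatible ordered set partition `𝒜` of `{1,…,g}`. -/
def Efun {F : Type*} [Field F] (n r : ℕ) (f L M : ℕ → ℕ) (𝒜 : ℕ → Finset ℕ)
    (Xv Yv : F) : F :=
  (∏ i ∈ Finset.Icc 1 r, gaussBinom Xv⁻¹ (L i - M (i - 1)) (L i - M i)) *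
    (∏ i ∈ Finset.Icc 1 r, igusaWO (tpar 𝒜 i - tpar 𝒜 (i - 1))
      (fun I => Xv ^ ((2 * n - M (i - 1) + epsA f L 𝒜 i I) * M (i - 1)) *
        Yv ^ (2 * epsA f L 𝒜 i I + M (i - 1)))) *
    (∏ i ∈ Finset.Icc 1 (r - 1), igusaCirc (M i - M (i - 1)) Xv⁻¹
      (fun j => Xv ^ ((M (i - 1) + j) * (2 * n + L i - (M (i - 1) + j))) *
        Yv ^ (2 * L i + M (i - 1) + j))) *
    igusa (n - M (r - 1)) Xv⁻¹
      (fun j => Xv ^ ((M (r - 1) + j) * (2 * n + L r - (M (r - 1) + j))) *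
        Yv ^ (2 * L r + M (r - 1) + j))

/-- The power series `E^f_{w,𝒜}(p,t)`, the explicit rational function `E^f_{w,𝒜}`
evaluated at `X = p`, `Y = t` and expanded as a power series in `t`. -/
def EfunPS (p n r : ℕ) (f L M : ℕ → ℕ) (𝒜 : ℕ → Finset ℕ) : PowerSeries ℚ :=
  (∏ i ∈ Finset.Icc 1 r,
      (PowerSeries.C : ℚ →+* PowerSeries ℚ) (gaussBinom ((p : ℚ)⁻¹) (L i - M (i - 1)) (L i - M i))) *
    (∏ i ∈ Finset.Icc 1 r, igusaWOPS (tpar 𝒜 i - tpar 𝒜 (i - 1))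
      (fun I => (PowerSeries.C : ℚ →+* PowerSeries ℚ) ((p : ℚ) ^ ((2 * n - M (i - 1) + epsA f L 𝒜 i I) * M (i - 1))) *
        PowerSeries.X ^ (2 * epsA f L 𝒜 i I + M (i - 1)))) *
    (∏ i ∈ Finset.Icc 1 (r - 1), igusaCircPS (M i - M (i - 1)) ((p : ℚ)⁻¹)
      (fun j => (PowerSeries.C : ℚ →+* PowerSeries ℚ) ((p : ℚ) ^ ((M (i - 1) + j) * (2 * n + L i - (M (i - 1) + j)))) *
        PowerSeries.X ^ (2 * L i + M (i - 1) + j))) *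
    igusaPS (n - M (r - 1)) ((p : ℚ)⁻¹)
      (fun j => (PowerSeries.C : ℚ →+* PowerSeries ℚ) ((p : ℚ) ^ ((M (r - 1) + j) * (2 * n + L r - (M (r - 1) + j)))) *
        PowerSeries.X ^ (2 * L r + M (r - 1) + j))

/-- The set of canonical representatives `(r, L, M, 𝒜)` of all pairs consisting of
a Dyck word `w` of length `2n` and an ordered set partition `𝒜` of `{1,…,g}`
compatible with `w`. -/
def dyckPartData (g n : ℕ) (f : ℕ → ℕ) : Set (ℕ × (ℕ → ℕ) × (ℕ → ℕ) × (ℕ → Finset ℕ)) :=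
  {d | DyckParams n d.1 d.2.1 d.2.2.1 ∧
    (∀ j, d.1 < j → d.2.1 j = n ∧ d.2.2.1 j = n) ∧
    (∀ i ∈ Finset.Icc 1 d.1, (d.2.2.2 i).Nonempty) ∧
    (∀ i ∈ Finset.Icc 1 d.1, ∀ j ∈ Finset.Icc 1 d.1, i ≠ j → Disjoint (d.2.2.2 i) (d.2.2.2 j)) ∧
    (Finset.Icc 1 d.1).biUnion d.2.2.2 = Finset.Icc 1 g ∧
    (∀ i ∈ Finset.Icc 1 d.1, ∑ j ∈ d.2.2.2 i, f j = d.2.1 i - d.2.1 (i - 1)) ∧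
    (∀ j, j = 0 ∨ d.1 < j → d.2.2.2 j = ∅)}

/-- The explicit rational function `W^f(X,Y)` expressing the local normal zeta function of
the Heisenberg group at an unramified prime with residue degrees `f_1, …, f_g`. -/
def Wfun {F : Type*} [Field F] (g n : ℕ) (f : ℕ → ℕ) (Xv Yv : F) : F :=
  (∏ i ∈ Finset.Icc 1 g, (1 - Yv ^ (2 * f i))) *
    (∏ i ∈ Finset.range (2 * n), (1 - Xv ^ i * Yv)⁻¹) *
    ∑ᶠ d ∈ dyckPartData g n f, Efun n d.1 f d.2.1 d.2.2.1 d.2.2.2 Xv Yv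
end
open Finset in
/-- Chains in the powerset of `S` with prescribed set of cardinalities `I`. -/
def chFib (S : Finset ℕ) (I : Finset ℕ) : Finset (Finset (Finset ℕ)) :=
  (S.powerset.powerset).filter
    (fun C => (∀ A ∈ C, ∀ B ∈ C, A ⊆ B ∨ B ⊆ A) ∧ C.image Finset.card = I)

open Finset in
lemma mem_chFib {S I : Finset ℕ} {C : Finset (Finset ℕ)} :
    C ∈ chFib S I ↔ (∀ A ∈ C, A ⊆ S) ∧ (∀ A ∈ C, ∀ B ∈ C, A ⊆ B ∨ B ⊆ A) ∧
      C.image Finset.card = I := by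
  simp [chFib, Finset.subset_iff, Finset.mem_powerset]

open Finset in
lemma chFib_cons (S : Finset ℕ) (i : ℕ) (J : Finset ℕ) (hJ : ∀ j ∈ J, j < i) :
    chFib S (insert i J) =
      (S.powersetCard i).biUnion (fun T => (chFib T J).image (insert T)) := by
  ext C
  simp only [mem_biUnion, mem_image, mem_powersetCard, mem_chFib]
  constructor
  · rintro ⟨hsub, hchain, himg⟩
    have hi : i ∈ C.image Finset.card := by rw [himg]; exact mem_insert_self _ _
    obtain ⟨T, hT, hTcard⟩ := mem_image.1 hi
    have key : ∀ A ∈ C, A ≠ T → A ⊆ T ∧ A.card ∈ J := by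
      intro A hA hAT
      have hAc : A.card ∈ insert i J := by rw [← himg]; exact mem_image_of_mem _ hA
      have hAJ : A.card ∈ J := by
        rcases mem_insert.1 hAc with hc | hc
        · exfalso; apply hAT
          rcases hchain A hA T hT with hs | hs
          · exact eq_of_subset_of_card_le hs (by omega)
          · exact (eq_of_subset_of_card_le hs (by omega)).symm
        · exact hc
      have hlt : A.card < i := hJ _ hAJ
      rcases hchain A hA T hT with hs | hs
      · exact ⟨hs, hAJ⟩
      · exact absurd (card_le_card hs) (by omega)
    refine ⟨T, ⟨hsub T hT, hTcard⟩, C.erase T, ⟨?_, ?_, ?_⟩, ?_⟩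
    · intro A hA
      exact (key A (mem_of_mem_erase hA) (ne_of_mem_erase hA)).1
    · intro A hA B hB
      exact hchain A (mem_of_mem_erase hA) B (mem_of_mem_erase hB)
    · ext j
      simp only [mem_image]
      constructor
      · rintro ⟨A, hA, rfl⟩
        exact (key A (mem_of_mem_erase hA) (ne_of_mem_erase hA)).2
      · intro hj
        have : j ∈ C.image Finset.card := by rw [himg]; exact mem_insert_of_mem hj
        obtain ⟨A, hA, rfl⟩ := mem_image.1 this
        have : A ≠ T := by rintro rfl; exact absurd (hJ _ hj) (by omega)
        exact ⟨A, mem_erase.2 ⟨this, hA⟩, rfl⟩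
    · exact insert_erase hT
  · rintro ⟨T, ⟨hTS, hTcard⟩, C', ⟨hsub, hchain, himg⟩, rfl⟩
    have hTC' : ∀ A ∈ C', A ⊆ T ∧ A ≠ T := by
      intro A hA
      refine ⟨hsub A hA, ?_⟩
      rintro rfl
      have : A.card ∈ J := by rw [← himg]; exact mem_image_of_mem _ hA
      exact absurd (hJ _ this) (by omega)
    refine ⟨?_, ?_, ?_⟩
    · intro A hA
      rcases mem_insert.1 hA with rfl | hA
      · exact hTS
      · exact ((hTC' A hA).1).trans hTS
    · intro A hA B hB
      rcases mem_insert.1 hA with hA' | hA'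
      · subst hA'
        rcases mem_insert.1 hB with hB' | hB'
        · subst hB'; exact Or.inl subset_rfl
        · exact Or.inr (hTC' B hB').1
      · rcases mem_insert.1 hB with hB' | hB'
        · subst hB'; exact Or.inl (hTC' A hA').1
        · exact hchain A hA' B hB'
    · rw [image_insert, himg, hTcard]

open Finset in
lemma chFib_card_eq : ∀ l : List ℕ, l.Pairwise (· > ·) → ∀ S : Finset ℕ,
    (chFib S l.toFinset).card = multinomAux S.card l := by
  intro l
  induction l with
  | nil =>
    intro _ S
    have : chFib S (∅ : Finset ℕ) = {∅} := by
      ext C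
      simp only [mem_chFib, mem_singleton, image_eq_empty]
      constructor
      · rintro ⟨-, -, rfl⟩; rfl
      · rintro rfl; simp
    simp [this, multinomAux]
  | cons i is ih =>
    intro hsort S
    have hlt : ∀ j ∈ is.toFinset, j < i := by
      intro j hj
      exact List.rel_of_pairwise_cons hsort (List.mem_toFinset.1 hj)
    have hsort' : is.Pairwise (· > ·) := hsort.of_cons
    rw [List.toFinset_cons, chFib_cons S i is.toFinset hlt]
    rw [card_biUnion, multinomAux]
    · have : ∀ T ∈ S.powersetCard i, ((chFib T is.toFinset).image (insert T)).card
          = multinomAux i is := by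
        intro T hT
        obtain ⟨hTS, hTcard⟩ := mem_powersetCard.1 hT
        rw [card_image_of_injOn, ← hTcard]
        · exact ih hsort' T
        · intro C hC C' hC' hCC'
          have hTn : ∀ D ∈ chFib T is.toFinset, T ∉ D := by
            intro D hD hTD
            have : T.card ∈ is.toFinset := by
              rw [← (mem_chFib.1 hD).2.2]; exact mem_image_of_mem _ hTD
            exact absurd (hlt _ this) (by omega)
          rw [← erase_insert (hTn C hC), hCC', erase_insert (hTn C' hC')]
      rw [sum_congr rfl this, sum_const, card_powersetCard, smul_eq_mul]
    · intro T hT T' hT' hne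
      simp only [Finset.disjoint_left]
      intro C hC hC'
      obtain ⟨D, hD, rfl⟩ := mem_image.1 hC
      obtain ⟨D', hD', hEq⟩ := mem_image.1 hC'
      apply hne
      have hiT : T.card = i := (mem_powersetCard.1 hT).2
      have hiT' : T'.card = i := (mem_powersetCard.1 hT').2
      have : T ∈ insert T' D' := by rw [hEq]; exact mem_insert_self _ _
      rcases mem_insert.1 this with h | h
      · exact h
      · exfalso
        have : T.card ∈ is.toFinset := by
          rw [← (mem_chFib.1 hD').2.2]; exact mem_image_of_mem _ h
        exact absurd (hlt _ this) (by omega)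

open Finset in
lemma chFib_card_multinom (S I : Finset ℕ) : (chFib S I).card = multinom S.card I := by
  have h1 : ((I.sort (· ≤ ·)).reverse).toFinset = I := by
    rw [List.toFinset_reverse, Finset.sort_toFinset]
  have h2 : ((I.sort (· ≤ ·)).reverse).Pairwise (· > ·) :=
    List.pairwise_reverse.2 (I.sortedLT_sort.pairwise)
  rw [multinom, ← chFib_card_eq _ h2 S, h1]

open Finset in
lemma chain_sum {R : Type*} [CommSemiring R] (h : ℕ) (hh : 0 < h) (g : ℕ → R) :
    ∑ C ∈ chainsOn h, ∏ I ∈ C, g I.card =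
      ∑ I ∈ (Finset.Icc 1 (h - 1)).powerset, (multinom h I : R) * ∏ i ∈ I, g i := by
  have hmaps : ∀ C ∈ chainsOn h, C.image Finset.card ∈ (Finset.Icc 1 (h - 1)).powerset := by
    intro C hC
    obtain ⟨hCp, hchain⟩ := Finset.mem_filter.1 hC
    rw [Finset.mem_powerset] at hCp ⊢
    intro j hj
    obtain ⟨A, hA, rfl⟩ := mem_image.1 hj
    obtain ⟨hAs, hAne, hAne'⟩ := Finset.mem_filter.1 (hCp hA)
    rw [Finset.mem_powerset] at hAs
    have h1 : 0 < A.card := card_pos.2 (nonempty_iff_ne_empty.2 hAne)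
    have h2 : A.card ≤ h := by simpa using card_le_card hAs
    have h3 : A.card ≠ h := by
      intro he
      exact hAne' (eq_of_subset_of_card_le hAs (by simp [he]))
    rw [Finset.mem_Icc]; omega
  rw [← Finset.sum_fiberwise_of_maps_to hmaps (fun C => ∏ I ∈ C, g I.card)]
  refine Finset.sum_congr rfl fun I hI => ?_
  rw [Finset.mem_powerset] at hI
  have hfib : (chainsOn h).filter (fun C => C.image Finset.card = I) =
      chFib (Finset.Icc 1 h) I := by
    ext C
    simp only [Finset.mem_filter, mem_chFib, chainsOn, Finset.mem_powerset]
    constructor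
    · rintro ⟨⟨hCp, hchain⟩, himg⟩
      refine ⟨fun A hA => ?_, hchain, himg⟩
      have := hCp hA
      rw [Finset.mem_filter, Finset.mem_powerset] at this
      exact this.1
    · rintro ⟨hsub, hchain, himg⟩
      refine ⟨⟨fun A hA => ?_, hchain⟩, himg⟩
      rw [Finset.mem_filter, Finset.mem_powerset]
      refine ⟨hsub A hA, ?_, ?_⟩
      · have : A.card ∈ I := by rw [← himg]; exact mem_image_of_mem _ hA
        have := Finset.mem_Icc.1 (hI this)
        intro he
        simp [he] at this
      · have : A.card ∈ I := by rw [← himg]; exact mem_image_of_mem _ hA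
        have hle := Finset.mem_Icc.1 (hI this)
        intro he
        rw [he] at hle
        simp [Nat.card_Icc] at hle
        omega
  have hprod : ∀ C ∈ (chainsOn h).filter (fun C => C.image Finset.card = I),
      ∏ A ∈ C, g A.card = ∏ i ∈ I, g i := by
    intro C hC
    obtain ⟨hC1, himg⟩ := Finset.mem_filter.1 hC
    obtain ⟨-, hchain⟩ := Finset.mem_filter.1 hC1
    rw [← himg, Finset.prod_image]
    intro A hA B hB hcard
    rcases hchain A hA B hB with hs | hs
    · exact eq_of_subset_of_card_le hs (by omega)
    · exact (eq_of_subset_of_card_le hs (by omega)).symm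
  rw [Finset.sum_congr rfl hprod, Finset.sum_const, hfib, chFib_card_multinom,
    Nat.card_Icc, Nat.add_sub_cancel, nsmul_eq_mul]


/-- Substituting `X_𝓘 := Z_{|𝓘|}` for every nonempty `𝓘 ⊆ {1,…,h}` in the generalized
Igusa function yields `I^wo_h((Z_{|𝓘|})_𝓘) = I_h(1; Z_1,…,Z_h)`, as rational functions
in the variables `Z_1, …, Z_h` over `ℚ`. -/
theorem igusaWO_substitute_card (h : ℕ) (hh : 0 < h) :
    igusaWO h (fun I : Finset ℕ =>
        algebraMap (MvPolynomial ℕ ℚ) (FractionRing (MvPolynomial ℕ ℚ))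
          (MvPolynomial.X I.card)) =
      igusaOne h (fun i =>
        algebraMap (MvPolynomial ℕ ℚ) (FractionRing (MvPolynomial ℕ ℚ))
          (MvPolynomial.X i)) := by
  rw [igusaWO, igusaOne]
  have hc : (Finset.Icc 1 h).card = h := by simp
  simp only [hc]
  congr 1
  exact chain_sum h hh (fun i =>
    algebraMap (MvPolynomial ℕ ℚ) (FractionRing (MvPolynomial ℕ ℚ)) (MvPolynomial.X i) /
      (1 - algebraMap (MvPolynomial ℕ ℚ) (FractionRing (MvPolynomial ℕ ℚ)) (MvPolynomial.X i)))
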